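/- Let (M, A, v, τ) be a First Fit Valid tuple with n bundles, let 1 ≤ i < j ≤ n, let c_i be any chore in A_i and c_j any chore in A_j. If v(c_j) ≤ fs(i), then v(c_j) ≤ v(c_i). -/

import Mathlib

open scoped Classical

noncomputable section

variable {C : Type*} [LinearOrder C]

/-- Total cost of a bundle of chores: the sum of the chore costs. -/
def bundleCost (v : C → ℝ) (B : Finset C) : ℝ := ∑ c ∈ B, v c

/-- The universal ordering is the ambient linear order on `C`, along which costs are
non-increasing; hence the `p`-th largest chore `B[p]` of a bundle `B` (ties broken by the
universal ordering) is the `p`-th element of `B` sorted along the order.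
`nthCost v B p` is `v (B[p])` (1-indexed), with the convention `0` for `p > |B|`. -/
def nthCost (v : C → ℝ) (B : Finset C) (p : ℕ) : ℝ :=
  ((B.sort (· ≤ ·)).map v).getD (p - 1) 0

/-- `B1 =lex B2` : equal cost at each position. -/
def lexEq (v : C → ℝ) (B1 B2 : Finset C) : Prop :=
  ∀ p : ℕ, nthCost v B1 p = nthCost v B2 p

/-- `B1 ≤lex B2`. -/
def lexLe (v : C → ℝ) (B1 B2 : Finset C) : Prop :=
  lexEq v B1 B2 ∨
    ∃ q : ℕ, nthCost v B1 q < nthCost v B2 q ∧ ∀ p < q, nthCost v B1 p = nthCost v B2 p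

/-- `B1 <lex B2`. -/
def lexLt (v : C → ℝ) (B1 B2 : Finset C) : Prop :=
  lexLe v B1 B2 ∧ ¬ lexEq v B1 B2

/-- `(M, v)` is a chore instance for the universal ordering given by the linear order on `C`:
all costs are nonnegative and non-increasing along the ordering. -/
def ChoreOrdered (M : Finset C) (v : C → ℝ) : Prop :=
  (∀ c ∈ M, 0 ≤ v c) ∧ ∀ c ∈ M, ∀ c' ∈ M, c ≤ c' → v c' ≤ v c

/-- `P` is a partition of `M` into `n` (possibly empty) bundles. -/
def IsPartition (M : Finset C) {n : ℕ} (P : Fin n → Finset C) : Prop :=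
  (∀ i, P i ⊆ M) ∧ (∀ i j, i ≠ j → Disjoint (P i) (P j)) ∧ ∀ c ∈ M, ∃ i, c ∈ P i

/-- The maximin share: the minimum over partitions of `M` into `n` bundles of the
maximum bundle cost. -/
def MMS (M : Finset C) (v : C → ℝ) (n : ℕ) : ℝ :=
  sInf {x : ℝ | ∃ P : Fin n → Finset C, IsPartition M P ∧ ∀ i, bundleCost v (P i) ≤ x}

/-- One pass of first-fit: scan the chores in the given list order, adding a chore whenever
the bundle cost stays at most `τ`. -/
def ffdFill (v : C → ℝ) (τ : ℝ) : List C → Finset C → Finset C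
  | [], B => B
  | c :: rest, B =>
      if bundleCost v (insert c B) ≤ τ then ffdFill v τ rest (insert c B)
      else ffdFill v τ rest B

/-- The bundle FFD builds from the remaining chores `R` (scanned from largest to smallest,
i.e. along the linear order on `C`). -/
def ffdBundle (v : C → ℝ) (τ : ℝ) (R : Finset C) : Finset C :=
  ffdFill v τ (R.sort (· ≤ ·)) ∅

/-- The chores remaining after FFD has filled `k` bundles. -/
def ffdRem (M : Finset C) (v : C → ℝ) (τ : ℝ) : ℕ → Finset C
  | 0 => M
  | k + 1 => ffdRem M v τ k \ ffdBundle v τ (ffdRem M v τ k)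

/-- The `(k+1)`-st bundle (0-indexed `k`) output by FFD. -/
def FFDBundle (M : Finset C) (v : C → ℝ) (τ : ℝ) (k : ℕ) : Finset C :=
  ffdBundle v τ (ffdRem M v τ k)

/-- `FFD(M, v, τ, n)` allocates all chores. -/
def FFDAllocatesAll (M : Finset C) (v : C → ℝ) (τ : ℝ) (n : ℕ) : Prop :=
  ffdRem M v τ n = ∅

/-- The union `A_1 ∪ ⋯ ∪ A_{k-1}` of the bundles preceding the `k`-th one (0-indexed). -/
def priorUnion {n : ℕ} (A : Fin n → Finset C) (k : Fin n) : Finset C :=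
  (Finset.univ.filter fun j : Fin n => j < k).biUnion A

/-- `B` is a `k`-th benchmark bundle of the collection `A`: a lexicographically maximal
subset of `M \ (A_1 ∪ ⋯ ∪ A_{k-1})` among subsets of cost at most `τ`. -/
def IsBenchmark (M : Finset C) (v : C → ℝ) (τ : ℝ) {n : ℕ}
    (A : Fin n → Finset C) (k : Fin n) (B : Finset C) : Prop :=
  B ⊆ M \ priorUnion A k ∧ bundleCost v B ≤ τ ∧
    ∀ B' ⊆ M \ priorUnion A k, bundleCost v B' ≤ τ → lexLe v B' B

/-- The tuple `(M, A, v, τ)` is First Fit Valid: `A` consists of pairwise disjoint bundles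
in `M`, `τ ≥ MMS(M, v, n)`, and each `A_k` is lexicographically at least the `k`-th
benchmark bundle. -/
def FirstFitValid (M : Finset C) {n : ℕ} (A : Fin n → Finset C) (v : C → ℝ) (τ : ℝ) : Prop :=
  (∀ k, A k ⊆ M) ∧ (∀ i j, i ≠ j → Disjoint (A i) (A j)) ∧ MMS M v n ≤ τ ∧
    ∀ (k : Fin n) (B : Finset C), IsBenchmark M v τ A k B → lexLe v B (A k)

/-- `c` is the last chore `B[|B|]` of the bundle `B`. -/
def IsLastChore (B : Finset C) (c : C) : Prop := c ∈ B ∧ ∀ c' ∈ B, c' ≤ c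

/-- The fit-in space `fs` of a bundle: `τ` minus the cost of the bundle without its
last chore. -/
def fitSpace (v : C → ℝ) (τ : ℝ) (B : Finset C) : ℝ :=
  if h : B.Nonempty then τ - bundleCost v (B.erase (B.max' h)) else τ

/-- The chore `c = B[p]` of `B` is `x`-redundant: the cost of `{B[1], …, B[p-1]}`
is at least `x`. -/
def Redundant (v : C → ℝ) (x : ℝ) (B : Finset C) (c : C) : Prop :=
  c ∈ B ∧ x ≤ bundleCost v (B.filter fun c' => c' < c)

/-- `A` dominates `B`: there is `f : B → A` with `v(f⁻¹(c')) ≤ v(c')` for every `c' ∈ A`. -/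
def Dominates (v : C → ℝ) (A B : Finset C) : Prop :=
  ∃ f : C → C, (∀ c ∈ B, f c ∈ A) ∧
    ∀ c' ∈ A, bundleCost v (B.filter fun c => f c = c') ≤ v c'

/-- `cnew` is a suitable reduced chore for `cstar` (the excessive chore of `A_k`):
`v(cnew) < v(cstar)` and, running FFD on `M' = (M \ {cstar}) ∪ {cnew}`, the union of the
first `k` output bundles equals `((A_1 ∪ ⋯ ∪ A_k) \ {cstar}) ∪ {cnew}`. -/
def SuitableReduced (M : Finset C) (v : C → ℝ) (τ : ℝ) {n : ℕ}
    (A : Fin n → Finset C) (k : Fin n) (cstar cnew : C) : Prop :=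
  v cnew < v cstar ∧
    (Finset.univ.filter fun j : Fin n => j ≤ k).biUnion
        (fun j => FFDBundle (insert cnew (M.erase cstar)) v τ j.val) =
      insert cnew (((Finset.univ.filter fun j : Fin n => j ≤ k).biUnion A).erase cstar)

/-- The Tidy-Up conditions on the tuple `(M, A, v, τ)`. -/
def TidyUp (M : Finset C) {n : ℕ} (A : Fin n → Finset C) (v : C → ℝ) (τ : ℝ) : Prop :=
  FirstFitValid M A v τ ∧
  (∃ cstar, M \ Finset.univ.biUnion A = {cstar} ∧ ∀ c ∈ M, v cstar ≤ v c) ∧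
  (∀ k, ∀ c ∈ A k, ¬ Redundant v (MMS M v n) (A k) c) ∧
  (∀ c ∈ M, τ - MMS M v n < v c) ∧
  (∀ k, 2 ≤ (A k).card ∧ nthCost v (A k) 1 + nthCost v (A k) 2 < MMS M v n) ∧
  (∃ P : Fin n → Finset C, IsPartition M P ∧
    (∀ j, bundleCost v (P j) ≤ MMS M v n ∧ 3 ≤ (P j).card) ∧
    ∀ k j, ¬ Dominates v (A k) (P j))

/-- One pass of HFFD's first-fit with remaining agents `T`: a chore is added iff some
remaining agent accepts the enlarged bundle. -/
def hffdFill {n : ℕ} (v : Fin n → C → ℝ) (h : Fin n → ℝ) (T : Finset (Fin n)) :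
    List C → Finset C → Finset C
  | [], B => B
  | c :: rest, B =>
      if ∃ i ∈ T, bundleCost (v i) (insert c B) ≤ h i then
        hffdFill v h T rest (insert c B)
      else hffdFill v h T rest B

/-- `(A, assign)` is a run of HFFD on the instance `(M, v)` with thresholds `h`:
bundle `A_k` is built by first-fit over the remaining chores using the remaining agents,
and is assigned to the remaining agent `assign k`, who accepts it. -/
def IsHFFDRun {n : ℕ} (M : Finset C) (v : Fin n → C → ℝ) (h : Fin n → ℝ)
    (A : Fin n → Finset C) (assign : Fin n → Fin n) : Prop :=
  Function.Injective assign ∧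
    ∀ k : Fin n,
      A k = hffdFill v h
          (Finset.univ \ (Finset.univ.filter fun j : Fin n => j < k).image assign)
          ((M \ priorUnion A k).sort (· ≤ ·)) ∅ ∧
      bundleCost (v (assign k)) (A k) ≤ h (assign k)


-- Auxiliary lemmas


lemma lexLe_iff (v : C → ℝ) (B1 B2 : Finset C) :
    lexLe v B1 B2 ↔ toLex (fun p => nthCost v B1 p) ≤ toLex (fun p => nthCost v B2 p) := by
  constructor
  · rintro (h | ⟨q, hq, hprev⟩)
    · exact le_of_eq (congrArg toLex (funext h))
    · exact le_of_lt ⟨q, fun p hp => hprev p hp, hq⟩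
  · intro h
    rcases h.lt_or_eq with h | h
    · obtain ⟨q, hprev, hq⟩ := h
      exact Or.inr ⟨q, hq, fun p hp => hprev p hp⟩
    · exact Or.inl fun p => congrFun (toLex.injective h) p

lemma sorted_desc_map (v : C → ℝ) {M B : Finset C}
    (hv : ∀ c ∈ M, ∀ c' ∈ M, c ≤ c' → v c' ≤ v c) (hBM : B ⊆ M) :
    ((B.sort (· ≤ ·)).map v).Pairwise (· ≥ ·) := by
  rw [List.pairwise_map]
  refine (B.pairwise_sort (· ≤ ·)).imp_of_mem ?_
  intro a b ha hb hab
  exact hv a (hBM ((Finset.mem_sort _).mp ha)) b (hBM ((Finset.mem_sort _).mp hb)) hab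

lemma nthCost_nonneg (v : C → ℝ) {B : Finset C} (hB : ∀ c ∈ B, 0 ≤ v c) (p : ℕ) :
    0 ≤ nthCost v B p := by
  unfold nthCost
  by_cases h : p - 1 < ((B.sort (· ≤ ·)).map v).length
  · rw [List.getD_eq_getElem _ _ h]
    have hmem := List.getElem_mem h
    obtain ⟨c, hc, hcv⟩ := List.mem_map.mp hmem
    rw [← hcv]; exact hB c ((Finset.mem_sort _).mp hc)
  · rw [List.getD_eq_default _ _ (le_of_not_gt h)]

lemma countP_sort_map (v : C → ℝ) (B : Finset C) (x : ℝ) :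
    ((B.sort (· ≤ ·)).map v).countP (fun y => decide (x ≤ y)) =
      Multiset.countP (fun c => x ≤ v c) B.val := by
  rw [List.countP_map]
  rw [(B.sort_perm_toList (· ≤ ·)).countP_eq]
  have : (B.toList : Multiset C) = B.val := Finset.coe_toList B
  rw [← this, Multiset.coe_countP]
  rfl

lemma getD_le_iff {l : List ℝ} (hs : l.Pairwise (· ≥ ·)) {x : ℝ} (hx : 0 < x) (k : ℕ) :
    x ≤ l.getD k 0 ↔ k < l.countP (fun y => decide (x ≤ y)) := by
  induction l generalizing k with
  | nil => simp [hx.not_ge]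
  | cons a t ih =>
    obtain ⟨hat, ht⟩ := List.pairwise_cons.mp hs
    cases k with
    | zero =>
      simp only [List.getD_cons_zero, List.countP_cons]
      by_cases h : x ≤ a
      · simp [h]
      · have h0 : t.countP (fun y => decide (x ≤ y)) = 0 :=
          List.countP_eq_zero.mpr fun b hb => by
            simpa using not_le_of_gt (lt_of_le_of_lt (hat b hb) (lt_of_not_ge h))
        simp [h, h0]
    | succ k =>
      rw [List.getD_cons_succ, ih ht, List.countP_cons]
      by_cases h : x ≤ a
      · simp [h]
      · have h0 : t.countP (fun y => decide (x ≤ y)) = 0 :=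
          List.countP_eq_zero.mpr fun b hb => by
            simpa using not_le_of_gt (lt_of_le_of_lt (hat b hb) (lt_of_not_ge h))
        simp [h, h0]

lemma sum_map_sort (v : C → ℝ) (B : Finset C) :
    ((B.sort (· ≤ ·)).map v).sum = bundleCost v B := by
  have h : (↑(B.sort (· ≤ ·)) : Multiset C) = B.val := Finset.sort_eq B _
  rw [bundleCost, Finset.sum_eq_multiset_sum, ← h, Multiset.map_coe, Multiset.sum_coe]


/-- in a First Fit Valid tuple, if a chore of a later bundle fits in the
fit-in space of an earlier bundle, then it is no larger than any chore of that bundle. -/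
theorem fits_in_earlier_bundle_implies_smaller {n : ℕ}
    (M : Finset C) (A : Fin n → Finset C) (v : C → ℝ) (τ : ℝ)
    (hv : ChoreOrdered M v) (hFFV : FirstFitValid M A v τ)
    (i j : Fin n) (hij : i < j)
    (ci : C) (hci : ci ∈ A i) (cj : C) (hcj : cj ∈ A j)
    (hfit : v cj ≤ fitSpace v τ (A i)) :
    v cj ≤ v ci := by
  by_contra hcon
  push_neg at hcon
  obtain ⟨hAM, hdisj, _, hbench⟩ := hFFV
  have hAiM : A i ⊆ M := hAM i
  have hne : (A i).Nonempty := ⟨ci, hci⟩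
  set m := (A i).max' hne with hm
  have hmmem : m ∈ A i := (A i).max'_mem hne
  have hcim : ci ≤ m := (A i).le_max' ci hci
  have hvm : v m ≤ v ci := hv.2 ci (hAiM hci) m (hAiM hmmem) hcim
  have hmj : v m < v cj := lt_of_le_of_lt hvm hcon
  have hcjAi : cj ∉ A i :=
    Finset.disjoint_left.mp (hdisj j i (ne_of_gt hij)) hcj
  set E := (A i).erase m with hE
  have hcjE : cj ∉ E := fun h => hcjAi (Finset.mem_of_mem_erase h)
  have hmE : m ∉ E := Finset.notMem_erase m (A i)
  have hAieq : insert m E = A i := Finset.insert_erase hmmem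
  set B' := insert cj E with hB'
  have hB'M : B' ⊆ M := by
    intro c hc
    rcases Finset.mem_insert.mp hc with rfl | hc
    · exact hAM j hcj
    · exact hAiM (Finset.mem_of_mem_erase hc)
  -- costs
  have hEcost : bundleCost v B' = bundleCost v E + v cj := by
    rw [hB', bundleCost, Finset.sum_insert hcjE, bundleCost]; ring
  have hAicost : bundleCost v (A i) = bundleCost v E + v m := by
    rw [← hAieq, bundleCost, Finset.sum_insert hmE, bundleCost]; ring
  have hfs : fitSpace v τ (A i) = τ - bundleCost v E := by
    rw [fitSpace, dif_pos hne]
  have hB'τ : bundleCost v B' ≤ τ := by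
    rw [hfs] at hfit; rw [hEcost]; linarith
  -- subset of available chores
  have hsub : B' ⊆ M \ priorUnion A i := by
    intro c hc
    rw [Finset.mem_sdiff]
    refine ⟨hB'M hc, ?_⟩
    intro hcp
    rw [priorUnion, Finset.mem_biUnion] at hcp
    obtain ⟨k, hk, hck⟩ := hcp
    rw [Finset.mem_filter] at hk
    rcases Finset.mem_insert.mp hc with rfl | hc
    · exact Finset.disjoint_left.mp (hdisj k j (ne_of_lt (lt_trans hk.2 hij))) hck hcj
    · exact Finset.disjoint_left.mp (hdisj k i (ne_of_lt hk.2)) hck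
        (Finset.mem_of_mem_erase hc)
  -- cardinalities
  have hcard : B'.card = (A i).card := by
    rw [hB', Finset.card_insert_of_notMem hcjE, ← hAieq,
      Finset.card_insert_of_notMem hmE]
  -- pointwise inequality
  have hpt : ∀ p : ℕ, nthCost v (A i) p ≤ nthCost v B' p := by
    intro p
    rcases le_or_gt (nthCost v (A i) p) 0 with hx | hx
    · exact le_trans hx (nthCost_nonneg v (fun c hc => hv.1 c (hB'M hc)) p)
    · set x := nthCost v (A i) p with hxdef
      have hAs : (((A i).sort (· ≤ ·)).map v).Pairwise (· ≥ ·) :=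
        sorted_desc_map v hv.2 hAiM
      have hBs : ((B'.sort (· ≤ ·)).map v).Pairwise (· ≥ ·) :=
        sorted_desc_map v hv.2 hB'M
      have h1 : x ≤ (((A i).sort (· ≤ ·)).map v).getD (p - 1) 0 := le_of_eq hxdef
      rw [getD_le_iff hAs hx, countP_sort_map] at h1
      have hcount : Multiset.countP (fun c => x ≤ v c) (A i).val ≤
          Multiset.countP (fun c => x ≤ v c) B'.val := by
        have hA' : Multiset.countP (fun c => x ≤ v c) (A i).val =
            ((A i).filter (fun c => x ≤ v c)).card := by
          rw [Multiset.countP_eq_card_filter]; rfl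
        have hB'c : Multiset.countP (fun c => x ≤ v c) B'.val =
            (B'.filter (fun c => x ≤ v c)).card := by
          rw [Multiset.countP_eq_card_filter]; rfl
        rw [hA', hB'c, ← hAieq, hB', Finset.filter_insert, Finset.filter_insert]
        by_cases hvmx : x ≤ v m
        · have hvcx : x ≤ v cj := le_of_lt (lt_of_le_of_lt hvmx hmj)
          rw [if_pos hvmx, if_pos hvcx,
            Finset.card_insert_of_notMem (fun h => hmE (Finset.mem_of_mem_filter _ h)),
            Finset.card_insert_of_notMem (fun h => hcjE (Finset.mem_of_mem_filter _ h))]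
        · rw [if_neg hvmx]
          by_cases hvcx : x ≤ v cj
          · rw [if_pos hvcx]
            exact le_trans (Nat.le_succ _)
              (le_of_eq (Finset.card_insert_of_notMem
                (fun h => hcjE (Finset.mem_of_mem_filter _ h))).symm)
          · rw [if_neg hvcx]
      have h2 : p - 1 < (((B'.sort (· ≤ ·)).map v)).countP (fun y => decide (x ≤ y)) := by
        rw [countP_sort_map]
        exact lt_of_lt_of_le h1 hcount
      exact (getD_le_iff hBs hx (p - 1)).mpr h2
  -- the cost functions are distinct
  have hneq : (fun p => nthCost v (A i) p) ≠ (fun p => nthCost v B' p) := by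
    intro h
    have hlen : (((A i).sort (· ≤ ·)).map v).length = ((B'.sort (· ≤ ·)).map v).length := by
      simp [Finset.length_sort, hcard]
    have hleq : ((A i).sort (· ≤ ·)).map v = (B'.sort (· ≤ ·)).map v := by
      refine List.ext_getElem hlen ?_
      intro k h1 h2
      have := congrFun h (k + 1)
      simp only [nthCost, Nat.add_sub_cancel] at this
      rw [← List.getD_eq_getElem _ 0 h1, ← List.getD_eq_getElem _ 0 h2]
      exact this
    have hsum : bundleCost v (A i) = bundleCost v B' := by
      rw [← sum_map_sort, ← sum_map_sort, hleq]
    rw [hAicost, hEcost] at hsum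
    linarith
  have hlt : toLex (fun p => nthCost v (A i) p) < toLex (fun p => nthCost v B' p) :=
    lt_of_le_of_ne (Pi.toLex_monotone hpt) (fun h => hneq (toLex.injective h))
  -- benchmark existence
  set S := ((M \ priorUnion A i).powerset).filter (fun B => bundleCost v B ≤ τ) with hS
  have hB'S : B' ∈ S := by
    rw [hS, Finset.mem_filter, Finset.mem_powerset]
    exact ⟨hsub, hB'τ⟩
  obtain ⟨B, hBS, hBmax⟩ :=
    S.exists_max_image (fun B => toLex (fun p => nthCost v B p)) ⟨B', hB'S⟩
  rw [hS, Finset.mem_filter, Finset.mem_powerset] at hBS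
  have hbenchB : IsBenchmark M v τ A i B := by
    refine ⟨hBS.1, hBS.2, ?_⟩
    intro B'' hB''sub hB''τ
    have : B'' ∈ S := by
      rw [hS, Finset.mem_filter, Finset.mem_powerset]; exact ⟨hB''sub, hB''τ⟩
    exact (lexLe_iff v B'' B).mpr (hBmax B'' this)
  have h2 : toLex (fun p => nthCost v B' p) ≤ toLex (fun p => nthCost v B p) :=
    hBmax B' hB'S
  have h3 : toLex (fun p => nthCost v B p) ≤ toLex (fun p => nthCost v (A i) p) :=
    (lexLe_iff v B (A i)).mp (hbench i B hbenchB)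
  exact absurd (lt_of_lt_of_le hlt (le_trans h2 h3)) (lt_irrefl _)
end
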